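/- Let (x₁, y) and (x₂, y) be points in the upper half-plane with x₁ ≥ x₂, and let v₁, v₂ be unit vectors lying strictly in the second and third quadrants respectively. Suppose v₁ and v₂ are right-admissible with respect to (x₁, y) and (x₂, y): (1) the canonical circle C₁ through (x₁, y) tangent to v₁ with center (a₁, 0) and radius R₁ satisfies a₁ > R₁; (2) θ(v₂) ≥ θ(v₁'), where v₁' is the reflection of v₁ over the x-axis; (3) x₁ − a₁ ≥ a₁ − x₂. Then (x₁, y)/|(x₁, y)|² · v₁⊥ > (x₂, y)/|(x₂, y)|² · v₂⊥, where w⊥ denotes clockwise rotation of w by π/2. -/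

import Mathlib

open Real

set_option maxHeartbeats 800000 in
/-- Right-case admissibility comparison (Prop. `H1_comparison_right`).
Points `(x₁, y)`, `(x₂, y)` in the upper half-plane with `x₁ ≥ x₂`; unit
vectors `v₁ = (cos s₁, sin s₁)` strictly in the second quadrant
(`s₁ ∈ (π/2, π)`) and `v₂ = (cos s₂, sin s₂)` strictly in the third quadrant
(`s₂ ∈ (π, 3π/2)`).  The canonical circle at `(x₁, y)` tangent to `v₁` has
center `(a₁, 0)` and radius `R₁ > 0`:  `(x₁ - a₁) cos s₁ + y sin s₁ = 0` and
`(x₁ - a₁)² + y² = R₁²`.  Admissibility: `a₁ > R₁`; `θ(v₂) ≥ θ(v₁')`, i.e.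
`s₂ ≥ 2π - s₁`; and `x₁ - a₁ ≥ a₁ - x₂`.  Then, with `v⊥ = (sin s, -cos s)`
the clockwise rotation of `v` by `π/2`,
`(x₁, y)/|(x₁, y)|² · v₁⊥ > (x₂, y)/|(x₂, y)|² · v₂⊥`. -/
theorem stmt_3 (x₁ x₂ y s₁ s₂ a₁ R₁ : ℝ) (hy : 0 < y) (hx : x₂ ≤ x₁)
    (hs₁ : s₁ ∈ Set.Ioo (π/2) π) (hs₂ : s₂ ∈ Set.Ioo π (3*π/2))
    (hR₁ : 0 < R₁)
    (htan : (x₁ - a₁) * cos s₁ + y * sin s₁ = 0)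
    (hrad : (x₁ - a₁)^2 + y^2 = R₁^2)
    (hadm1 : R₁ < a₁)
    (hadm2 : 2*π - s₁ ≤ s₂)
    (hadm3 : a₁ - x₂ ≤ x₁ - a₁) :
    (x₂ * sin s₂ + y * (-cos s₂)) / (x₂^2 + y^2) <
    (x₁ * sin s₁ + y * (-cos s₁)) / (x₁^2 + y^2) := by
  obtain ⟨h1, h2⟩ := hs₁
  obtain ⟨h3, h4⟩ := hs₂
  have hπ := Real.pi_pos
  have hsin1 : 0 < sin s₁ := Real.sin_pos_of_pos_of_lt_pi (by linarith) h2
  have hcos1 : cos s₁ < 0 := Real.cos_neg_of_pi_div_two_lt_of_lt h1 (by linarith)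
  have hb : 0 < x₁ - a₁ := by
    by_contra h
    push_neg at h
    have h' := mul_nonneg (neg_nonneg.mpr h) (neg_nonneg.mpr hcos1.le)
    have h'' := mul_pos hy hsin1
    linarith
  have hsc : sin s₁ ^ 2 + cos s₁ ^ 2 = 1 := Real.sin_sq_add_cos_sq s₁
  have hsq : (x₁ - a₁)^2 * cos s₁^2 = y^2 * sin s₁^2 := by
    linear_combination ((x₁ - a₁) * cos s₁ - y * sin s₁) * htan
  have hcR : cos s₁^2 * R₁^2 = y^2 := by
    linear_combination (-(cos s₁^2)) * hrad + hsq + y^2 * hsc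
  have h5 : (cos s₁ * R₁ + y) * (cos s₁ * R₁ - y) = 0 := by linear_combination hcR
  have h6 : cos s₁ * R₁ - y < 0 := by
    linarith [mul_neg_of_neg_of_pos hcos1 hR₁]
  have hc : cos s₁ * R₁ = -y := by
    rcases mul_eq_zero.mp h5 with h | h
    · linarith
    · linarith
  have hs' : sin s₁ * R₁ = x₁ - a₁ := by
    have hy' : y * (sin s₁ * R₁ - (x₁ - a₁)) = 0 := by
      linear_combination R₁ * htan - (x₁ - a₁) * hc
    rcases mul_eq_zero.mp hy' with h | h
    · linarith
    · linarith
  have hbR : x₁ - a₁ < R₁ := by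
    by_contra h
    push_neg at h
    have := mul_self_le_mul_self hR₁.le h
    have := mul_pos hy hy
    nlinarith [hrad]
  have hx2pos : 0 < x₂ := by linarith
  have hx1pos : 0 < x₁ := by linarith
  -- key angular bound
  set m := (s₂ + (2*π - s₁)) / 2 with hm
  set d := (s₂ - (2*π - s₁)) / 2 with hd
  have hm1 : s₂ = m + d := by rw [hm, hd]; ring
  have hm2 : 2*π - s₁ = m - d := by rw [hm, hd]; ring
  have hsind : 0 ≤ sin d := by
    apply Real.sin_nonneg_of_nonneg_of_le_pi
    · rw [hd]; linarith
    · rw [hd]; linarith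
  have hcosm : cos m < 0 := by
    apply Real.cos_neg_of_pi_div_two_lt_of_lt
    · rw [hm]; linarith
    · rw [hm]; linarith
  have hsinm : sin m < 0 := by
    have h7 : 0 < sin (m - π) := by
      apply Real.sin_pos_of_pos_of_lt_pi
      · rw [hm]; linarith
      · rw [hm]; linarith
    rw [Real.sin_sub_pi] at h7; linarith
  have es : sin s₂ = sin m * cos d + cos m * sin d := by rw [hm1, Real.sin_add]
  have ec : cos s₂ = cos m * cos d - sin m * sin d := by rw [hm1, Real.cos_add]
  have es1 : sin s₁ = -(sin m * cos d - cos m * sin d) := by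
    have e2 : sin (2*π - s₁) = -sin s₁ := by
      rw [Real.sin_sub, Real.sin_two_pi, Real.cos_two_pi]; ring
    rw [hm2, Real.sin_sub] at e2; linarith
  have ec1 : cos s₁ = cos m * cos d + sin m * sin d := by
    have e3 : cos (2*π - s₁) = cos s₁ := by
      rw [Real.cos_sub, Real.sin_two_pi, Real.cos_two_pi]; ring
    rw [hm2, Real.cos_sub] at e3; linarith
  have hneg : x₂ * cos m + y * sin m < 0 := by
    linarith [mul_neg_of_pos_of_neg hx2pos hcosm, mul_neg_of_pos_of_neg hy hsinm]
  have h7 : 0 ≤ sin d * (-(x₂ * cos m + y * sin m)) :=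
    mul_nonneg hsind (by linarith)
  have key : x₂ * sin s₂ + y * (-cos s₂) ≤ -x₂ * sin s₁ - y * cos s₁ := by
    rw [es, ec, es1, ec1]
    linarith [h7]
  have hd1 : (0:ℝ) < x₁^2 + y^2 := by positivity
  have hd2 : (0:ℝ) < x₂^2 + y^2 := by positivity
  -- core algebraic inequality
  have hmm : x₁ * (a₁ - x₂) ≤ x₁ * (x₁ - a₁) := mul_le_mul_of_nonneg_left hadm3 hx1pos.le
  have haR : R₁^2 < a₁^2 := by
    have := mul_self_lt_mul_self hR₁.le hadm1
    linarith [this]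
  have hyx : y^2 < x₁ * x₂ := by linarith [hmm, haR, hrad]
  have hinner : y^2 * (a₁ - x₂) < (x₁ - a₁) * (x₁ * x₂) := by
    rcases le_or_gt (a₁ - x₂) 0 with h | h
    · linarith [mul_nonneg (sq_nonneg y) (neg_nonneg.mpr h),
        mul_pos hb (mul_pos hx1pos hx2pos)]
    · linarith [mul_le_mul_of_nonneg_left hadm3 (sq_nonneg y),
        mul_lt_mul_of_pos_right hyx hb]
  have hcore : (y^2 - (x₁-a₁)*x₂) * (x₁^2+y^2) < ((x₁-a₁)*x₁ + y^2) * (x₂^2+y^2) := by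
    linarith [mul_lt_mul_of_pos_left hinner (show (0:ℝ) < x₁ + x₂ by linarith)]
  have eA : (-x₂ * sin s₁ - y * cos s₁) * R₁ = y^2 - (x₁-a₁)*x₂ := by
    linear_combination (-x₂) * hs' - y * hc
  have eB : (x₁ * sin s₁ + y * (-cos s₁)) * R₁ = (x₁-a₁)*x₁ + y^2 := by
    linear_combination x₁ * hs' - y * hc
  have step2 : (-x₂ * sin s₁ - y * cos s₁) / (x₂^2+y^2) <
      (x₁ * sin s₁ + y * (-cos s₁)) / (x₁^2+y^2) := by
    rw [div_lt_div_iff₀ hd2 hd1]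
    refine (mul_lt_mul_iff_of_pos_right hR₁).mp ?_
    calc (-x₂ * sin s₁ - y * cos s₁) * (x₁^2+y^2) * R₁
        = (y^2 - (x₁-a₁)*x₂) * (x₁^2+y^2) := by linear_combination (x₁^2+y^2) * eA
      _ < ((x₁-a₁)*x₁ + y^2) * (x₂^2+y^2) := hcore
      _ = (x₁ * sin s₁ + y * (-cos s₁)) * (x₂^2+y^2) * R₁ := by
          linear_combination (-(x₂^2+y^2)) * eB
  calc (x₂ * sin s₂ + y * (-cos s₂)) / (x₂^2 + y^2)
      ≤ (-x₂ * sin s₁ - y * cos s₁) / (x₂^2+y^2) := (div_le_div_iff_of_pos_right hd2).mpr key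
    _ < _ := step2
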